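/- Let (h_k)_{k≥0} be a non-decreasing real sequence and for each n let Φ_n be the first order branching clustering function on 𝕃₀⁽ⁿ⁾ with parameters (h_k)_{k=0}^n and h = h_n. Then the canonical free energy ω(ε) = lim_{n→∞} ω_n^{Φ_n}(ε) exists and is finite for all dyadic ε ∈ [0,1] if and only if ∑_k 2^{−k} h_k < ∞. -/

import Mathlib

open Filter
open scoped Classical

noncomputable section

namespace PWC

/-- Leaves of the binary tree `𝕋⁽ⁿ⁾` of depth `n`: binary words of length `n`
(coordinate `0` is the first step away from the root). -/
abbrev Leaf (n : ℕ) := Fin n → Bool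

/-- The age (distance from the leaves) of the youngest common ancestor `u ∧ v` of two
leaves: `n` minus the length of their longest common prefix. -/
def meetAge {n : ℕ} (u v : Leaf n) : ℕ :=
  if u = v then 0 else n - sInf {i : ℕ | ∃ h : i < n, u ⟨i, h⟩ ≠ v ⟨i, h⟩}

/-- Canonical representative (as a leaf) of the ancestor of `u` at age `k`:
keep the first `n - k` coordinates and pad by `false`. -/
def trunc {n : ℕ} (k : ℕ) (u : Leaf n) : Leaf n :=
  fun i => if (i : ℕ) < n - k then u i else false

/-- The branching points `ℬ(A) ∩ 𝕃_k` of `A` of age `k`, encoded by the canonical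
representatives of the corresponding ancestors. -/
def branchPts {n : ℕ} (A : Finset (Leaf n)) (k : ℕ) : Finset (Leaf n) :=
  ((A ×ˢ A).filter (fun p => meetAge p.1 p.2 = k)).image (fun p => trunc k p.1)

/-- `b_k(A)`: the number of branching points of `A` of age `k`. -/
def bcount {n : ℕ} (A : Finset (Leaf n)) (k : ℕ) : ℕ := (branchPts A k).card

/-- `b_{k,ℓ}(A)`: the number of branching points of `A` of age `ℓ` whose direct
branching ancestor has age `k`; for `k = n+1` the indicator that the oldest branching
point of `A` has age `ℓ` (i.e. the branching points at age `ℓ` having no strictly older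
branching ancestor). -/
def b2count {n : ℕ} (A : Finset (Leaf n)) (k l : ℕ) : ℕ :=
  if k = n + 1 then
    ((branchPts A l).filter (fun w => ∀ j, l < j → j ≤ n → trunc j w ∉ branchPts A j)).card
  else
    ((branchPts A l).filter (fun w => trunc k w ∈ branchPts A k ∧
      ∀ j, l < j → j < k → trunc j w ∉ branchPts A j)).card

/-- `A ≺ B` : `A` is more clustered than `B`. -/
def MoreClustered {n : ℕ} (A B : Finset (Leaf n)) : Prop :=
  ∃ σ : Leaf n → Leaf n, Set.BijOn σ ↑A ↑B ∧
    ∀ u ∈ A, ∀ v ∈ A, meetAge u v ≤ meetAge (σ u) (σ v)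

/-- `A ∼ B` : the subtrees of `𝕋⁽ⁿ⁾` generated by `A` and `B` are graph-isomorphic,
i.e. there is a bijection of the leaf sets preserving all meet ages. -/
def EquivClustered {n : ℕ} (A B : Finset (Leaf n)) : Prop :=
  ∃ σ : Leaf n → Leaf n, Set.BijOn σ ↑A ↑B ∧
    ∀ u ∈ A, ∀ v ∈ A, meetAge (σ u) (σ v) = meetAge u v

/-- A clustering function: vanishes on `∅` and is invariant under isomorphism of the
generated subtrees. -/
def IsClusteringFn {n : ℕ} (Φ : Finset (Leaf n) → ℝ) : Prop :=
  Φ ∅ = 0 ∧ ∀ A B : Finset (Leaf n), EquivClustered A B → Φ A = Φ B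

/-- A monotone clustering function. -/
def IsMonotoneClusteringFn {n : ℕ} (Φ : Finset (Leaf n) → ℝ) : Prop :=
  IsClusteringFn Φ ∧
    (∀ A B : Finset (Leaf n), MoreClustered A B → Φ A ≤ Φ B) ∧
    (∀ A B : Finset (Leaf n), Disjoint A B → Φ (A ∪ B) ≤ Φ A + Φ B)

/-- The partition function `Z_n^{Φ,J}`. -/
def Z (n : ℕ) (Φ : Finset (Leaf n) → ℝ) (J : ℝ) : ℝ :=
  ∑ A : Finset (Leaf n), Real.exp (J * (A.card : ℝ) - Φ A)

/-- The finite-volume free energy `ζ_n^Φ(J) = 2⁻ⁿ ln Z_n^{Φ,J}`. -/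
def zetaN (n : ℕ) (Φ : Finset (Leaf n) → ℝ) (J : ℝ) : ℝ :=
  Real.log (Z n Φ J) / 2 ^ n

/-- The canonical partition function `W_n^Φ(a₀)`. -/
def W (n : ℕ) (Φ : Finset (Leaf n) → ℝ) (a₀ : ℕ) : ℝ :=
  ∑ A ∈ Finset.univ.filter (fun A : Finset (Leaf n) => A.card = a₀), Real.exp (-Φ A)

/-- The finite-volume canonical free energy `ω_n^Φ(ε) = 2⁻ⁿ ln W_n^Φ(ε 2ⁿ)` (for a
dyadic `ε ∈ [0,1]` and `n` large, `⌊ε 2ⁿ⌋ = ε 2ⁿ`). -/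
def omegaN (n : ℕ) (Φ : Finset (Leaf n) → ℝ) (ε : ℝ) : ℝ :=
  Real.log (W n Φ ⌊ε * 2 ^ n⌋₊) / 2 ^ n

/-- The expected density `ρ_n^Φ(J)` of the dry set under the PWC measure. -/
def rhoN (n : ℕ) (Φ : Finset (Leaf n) → ℝ) (J : ℝ) : ℝ :=
  (∑ A : Finset (Leaf n), (A.card : ℝ) * Real.exp (J * (A.card : ℝ) - Φ A)) /
    (2 ^ n * Z n Φ J)

/-- A dyadic rational. -/
def IsDyadic (x : ℝ) : Prop := ∃ (k : ℤ) (m : ℕ), x = (k : ℝ) / 2 ^ m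

/-- The hypotheses of the general theory (Proposition 1.2): each `Φ_n` (for `n ≥ 1`) is
a monotone, non-negative clustering function, and `Φ_n(A) ≤ Φ_{n-1}(A) + γ_n` for any
`A` contained in the leaf set of one of the two subtrees of `𝕋⁽ⁿ⁾` rooted at a child of
the root (identified with `𝕋⁽ⁿ⁻¹⁾` by prepending the corresponding letter), where
`γ_n ≥ 0` and `∑ γ_n 2⁻ⁿ < ∞`. -/
structure GoodSeq (Φ : ∀ n, Finset (Fin n → Bool) → ℝ) (γ : ℕ → ℝ) : Prop where
  mono : ∀ n, 1 ≤ n → IsMonotoneClusteringFn (Φ n)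
  nonneg : ∀ n, 1 ≤ n → ∀ A, 0 ≤ Φ n A
  gamma_nonneg : ∀ n, 0 ≤ γ n
  gamma_summable : Summable fun n => γ n / 2 ^ n
  subtree : ∀ (n : ℕ) (b : Bool) (A : Finset (Fin n → Bool)),
    Φ (n + 1) (A.image fun u => Fin.cons b u) ≤ Φ n A + γ (n + 1)

/-- The first order branching clustering function with parameters `(h_k)_{k=0}^n`, `h`. -/
def foPhi (n : ℕ) (hs : ℕ → ℝ) (h : ℝ) (A : Finset (Leaf n)) : ℝ :=
  if A = ∅ then 0 else (∑ k ∈ Finset.range (n + 1), hs k * (bcount A k : ℝ)) + h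

/-- The second order branching clustering function with parameters
`(h_{k,ℓ})_{0 ≤ ℓ < k ≤ n+1}`, `h`. -/
def soPhi (n : ℕ) (H : ℕ → ℕ → ℝ) (h : ℝ) (A : Finset (Leaf n)) : ℝ :=
  if A = ∅ then 0
  else (∑ k ∈ Finset.range (n + 2), ∑ l ∈ Finset.range k, H k l * (b2count A k l : ℝ)) + h

/-- A non-decreasing (infinite) triangular array. -/
def ArrayMono (H : ℕ → ℕ → ℝ) : Prop :=
  ∀ k k' l l' : ℕ, l < k → l' < k' → k ≤ k' → l ≤ l' → H k l ≤ H k' l'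

/-- The Dirichlet energy on `𝕋⁽ⁿ⁾` of `f` (vertices encoded as words of length `≤ n`,
read from the root; a vertex of length `m` has age `n - m` and its parent edge has
conductance `C (n - m)`). -/
def energy (n : ℕ) (C : ℕ → ℝ) (f : List Bool → ℝ) : ℝ :=
  ∑ m ∈ Finset.Icc 1 n, ∑ v : Fin m → Bool,
    C (n - m) * (f (List.ofFn v) - f (List.ofFn v).dropLast) ^ 2

/-- The capacity of a set of leaves `A ⊆ 𝕃₀⁽ⁿ⁾`. -/
def cap (n : ℕ) (C : ℕ → ℝ) (A : Finset (Leaf n)) : ℝ :=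
  sInf {x : ℝ | ∃ f : List Bool → ℝ, f [] = 1 ∧ (∀ u ∈ A, f (List.ofFn u) = 0) ∧
    x = energy n C f}


section Basics

variable {n : ℕ}

lemma meetAge_self (u : Leaf n) : meetAge u u = 0 := by simp [meetAge]

lemma meetAge_le (u v : Leaf n) : meetAge u v ≤ n := by
  unfold meetAge; split <;> omega

lemma diff_nonempty {u v : Leaf n} (h : u ≠ v) :
    {i : ℕ | ∃ h : i < n, u ⟨i, h⟩ ≠ v ⟨i, h⟩}.Nonempty := by
  rcases Function.ne_iff.mp h with ⟨j, hj⟩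
  exact ⟨j, j.isLt, by simpa using hj⟩

lemma meetAge_pos {u v : Leaf n} (h : u ≠ v) : 1 ≤ meetAge u v := by
  have hmem := Nat.sInf_mem (diff_nonempty h)
  obtain ⟨hlt, -⟩ := hmem
  unfold meetAge
  rw [if_neg h]
  omega

lemma meetAge_cons_ne {b b' : Bool} (hb : b ≠ b') (u v : Leaf n) :
    meetAge (Fin.cons b u) (Fin.cons b' v) = n + 1 := by
  have hne : (Fin.cons b u : Leaf (n+1)) ≠ Fin.cons b' v := by
    intro h
    exact hb (by simpa using congrFun h 0)
  have h0 : (0 : ℕ) ∈ {i : ℕ | ∃ h : i < n + 1,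
      (Fin.cons b u : Leaf (n+1)) ⟨i, h⟩ ≠ (Fin.cons b' v : Leaf (n+1)) ⟨i, h⟩} :=
    ⟨Nat.succ_pos n, by simpa using hb⟩
  unfold meetAge
  rw [if_neg hne, Nat.sInf_eq_zero.mpr (Or.inl h0)]; omega

lemma meetAge_cons_same (b : Bool) (u v : Leaf n) :
    meetAge (Fin.cons b u) (Fin.cons b v) = meetAge u v := by
  by_cases huv : u = v
  · subst huv; simp [meetAge_self]
  · have hne : (Fin.cons b u : Leaf (n+1)) ≠ Fin.cons b v := by
      intro h
      exact huv (funext fun i => by simpa using congrFun h i.succ)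
    set D : Set ℕ := {i : ℕ | ∃ h : i < n, u ⟨i, h⟩ ≠ v ⟨i, h⟩} with hD
    set D' : Set ℕ := {i : ℕ | ∃ h : i < n + 1,
      (Fin.cons b u : Leaf (n+1)) ⟨i, h⟩ ≠ (Fin.cons b v : Leaf (n+1)) ⟨i, h⟩} with hD'
    have hmem : ∀ i, i ∈ D' ↔ ∃ j, j ∈ D ∧ i = j + 1 := by
      intro i
      constructor
      · rintro ⟨hi, hne'⟩
        match i with
        | 0 => simp at hne'
        | j + 1 =>
          refine ⟨j, ⟨Nat.lt_of_succ_lt_succ hi, ?_⟩, rfl⟩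
          have : (⟨j+1, hi⟩ : Fin (n+1)) = (⟨j, Nat.lt_of_succ_lt_succ hi⟩ : Fin n).succ := rfl
          rw [this, Fin.cons_succ, Fin.cons_succ] at hne'
          exact hne'
      · rintro ⟨j, ⟨hj, hne'⟩, rfl⟩
        refine ⟨Nat.succ_lt_succ hj, ?_⟩
        have : (⟨j+1, Nat.succ_lt_succ hj⟩ : Fin (n+1)) = (⟨j, hj⟩ : Fin n).succ := rfl
        rw [this, Fin.cons_succ, Fin.cons_succ]
        exact hne'
    have hDne : D.Nonempty := diff_nonempty huv
    have hD'ne : D'.Nonempty := diff_nonempty hne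
    have hinf : sInf D' = sInf D + 1 := by
      have h1 : sInf D' ≤ sInf D + 1 :=
        Nat.sInf_le ((hmem _).mpr ⟨sInf D, Nat.sInf_mem hDne, rfl⟩)
      have h2 : sInf D + 1 ≤ sInf D' := by
        obtain ⟨j, hj, hje⟩ := (hmem _).mp (Nat.sInf_mem hD'ne)
        have := Nat.sInf_le hj
        omega
      omega
    have hlt : sInf D < n := (Nat.sInf_mem hDne).1
    unfold meetAge
    rw [if_neg hne, if_neg huv, ← hD, ← hD', hinf]
    omega

lemma trunc_cons {k : ℕ} (hk : k ≤ n) (b : Bool) (u : Leaf n) :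
    trunc k (Fin.cons b u : Leaf (n+1)) = Fin.cons b (trunc k u) := by
  funext i
  refine Fin.cases ?_ (fun j => ?_) i
  · simp [trunc]; omega
  · have h1 : ((j.succ : Fin (n+1)) : ℕ) = (j : ℕ) + 1 := rfl
    simp only [trunc, Fin.cons_succ, h1]
    have h2 : n + 1 - k = (n - k) + 1 := by omega
    rw [h2]
    simp [Nat.succ_lt_succ_iff]

lemma trunc_top {k : ℕ} (hk : n ≤ k) (u : Leaf n) :
    trunc k u = fun _ => false := by
  funext i
  simp [trunc]; omega

end Basics
section Emb

variable {n : ℕ}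

/-- Extension of a word of length `n - k` to a leaf by padding with `false`. -/
def emb (n k : ℕ) (g : Fin (n - k) → Bool) : Leaf n :=
  fun i => if h : (i : ℕ) < n - k then g ⟨i, h⟩ else false

lemma emb_injective (n k : ℕ) : Function.Injective (emb n k) := by
  intro g g' h
  funext j
  have hj : (j : ℕ) < n - k := j.isLt
  have := congrFun h ⟨j, by omega⟩
  simpa [emb, hj] using this

lemma trunc_eq_emb (k : ℕ) (u : Leaf n) :
    trunc k u = emb n k (fun j => u ⟨j, by have := j.isLt; omega⟩) := by
  funext i
  by_cases h : (i : ℕ) < n - k <;> simp [trunc, emb, h]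

lemma branchPts_subset_emb (A : Finset (Leaf n)) (k : ℕ) :
    branchPts A k ⊆ Finset.univ.image (emb n k) := by
  intro w hw
  simp only [branchPts, Finset.mem_image] at hw
  obtain ⟨p, -, rfl⟩ := hw
  exact Finset.mem_image.mpr ⟨_, Finset.mem_univ _, (trunc_eq_emb k p.1).symm⟩

lemma bcount_le (A : Finset (Leaf n)) (k : ℕ) : bcount A k ≤ 2 ^ (n - k) := by
  have h1 := Finset.card_le_card (branchPts_subset_emb A k)
  have h2 : (Finset.univ.image (emb n k)).card = 2 ^ (n - k) := by
    rw [Finset.card_image_of_injective _ (emb_injective n k)]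
    simp
  exact h2 ▸ h1

lemma emb_trunc (k : ℕ) (g : Fin (n - k) → Bool) : trunc k (emb n k g) = emb n k g := by
  funext i
  by_cases h : (i : ℕ) < n - k <;> simp [trunc, emb, h]

lemma branchPts_univ {k : ℕ} (hk : k ≤ n) :
    branchPts (Finset.univ : Finset (Leaf n)) k = Finset.univ.image (emb n k) := by
  refine le_antisymm (branchPts_subset_emb _ _) ?_
  intro w hw
  obtain ⟨g, -, rfl⟩ := Finset.mem_image.mp hw
  rcases Nat.eq_zero_or_pos k with hk0 | hk0
  · subst hk0
    refine Finset.mem_image.mpr ⟨(emb n 0 g, emb n 0 g), ?_, emb_trunc 0 g⟩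
    simp [meetAge_self]
  · -- flip coordinate n - k
    have hnk : n - k < n := by omega
    set u : Leaf n := emb n k g with hu
    set v : Leaf n := fun i => if (i : ℕ) = n - k then true else u i with hv
    have hufalse : u ⟨n - k, hnk⟩ = false := by simp [hu, emb]
    have huv : u ≠ v := by
      intro h
      have := congrFun h ⟨n - k, hnk⟩
      rw [hufalse] at this
      simp [hv] at this
    have hD : {i : ℕ | ∃ h : i < n, u ⟨i, h⟩ ≠ v ⟨i, h⟩} = {n - k} := by
      ext i
      simp only [Set.mem_setOf_eq, Set.mem_singleton_iff]
      constructor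
      · rintro ⟨hi, hne⟩
        by_contra hne'
        exact hne (by simp [hv, hne'])
      · rintro rfl
        exact ⟨hnk, by rw [hufalse]; simp [hv]⟩
    have hmeet : meetAge u v = k := by
      unfold meetAge
      rw [if_neg huv, hD]
      simp; omega
    refine Finset.mem_image.mpr ⟨(u, v), ?_, ?_⟩
    · simp [hmeet]
    · simpa [hu] using (emb_trunc k g)

lemma bcount_univ {k : ℕ} (hk : k ≤ n) :
    bcount (Finset.univ : Finset (Leaf n)) k = 2 ^ (n - k) := by
  rw [bcount, branchPts_univ hk, Finset.card_image_of_injective _ (emb_injective n k)]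
  simp

end Emb
section Split

variable {n : ℕ}

/-- Glue two leaf sets of `𝕋⁽ⁿ⁾` into a leaf set of `𝕋⁽ⁿ⁺¹⁾`. -/
def glue (A₁ A₂ : Finset (Leaf n)) : Finset (Leaf (n+1)) :=
  A₁.image (fun u => Fin.cons false u) ∪ A₂.image (fun u => Fin.cons true u)

lemma cons_injective (b : Bool) : Function.Injective (fun u : Leaf n => (Fin.cons b u : Leaf (n+1))) := by
  intro u v h
  funext i
  simpa using congrFun h i.succ

lemma mem_glue {A₁ A₂ : Finset (Leaf n)} {x : Leaf (n+1)} :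
    x ∈ glue A₁ A₂ ↔ (∃ u ∈ A₁, x = Fin.cons false u) ∨ (∃ u ∈ A₂, x = Fin.cons true u) := by
  simp [glue, eq_comm]

lemma card_glue (A₁ A₂ : Finset (Leaf n)) : (glue A₁ A₂).card = A₁.card + A₂.card := by
  rw [glue, Finset.card_union_of_disjoint, Finset.card_image_of_injective _ (cons_injective false),
    Finset.card_image_of_injective _ (cons_injective true)]
  rw [Finset.disjoint_left]
  rintro x hx hx'
  obtain ⟨u, -, rfl⟩ := Finset.mem_image.mp hx
  obtain ⟨v, -, hv⟩ := Finset.mem_image.mp hx'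
  have := congrFun hv 0
  simp at this

lemma branchPts_glue {k : ℕ} (hk : k ≤ n) (A₁ A₂ : Finset (Leaf n)) :
    branchPts (glue A₁ A₂) k =
      (branchPts A₁ k).image (fun u => Fin.cons false u) ∪
      (branchPts A₂ k).image (fun u => Fin.cons true u) := by
  ext w
  simp only [branchPts, Finset.mem_union, Finset.mem_image, Finset.mem_filter,
    Finset.mem_product]
  constructor
  · rintro ⟨⟨x, y⟩, ⟨⟨hx, hy⟩, hm⟩, rfl⟩
    rcases mem_glue.mp hx with ⟨u, hu, rfl⟩ | ⟨u, hu, rfl⟩ <;>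
      rcases mem_glue.mp hy with ⟨v, hv, rfl⟩ | ⟨v, hv, rfl⟩
    · rw [meetAge_cons_same] at hm
      exact Or.inl ⟨trunc k u, ⟨⟨u, v⟩, ⟨⟨hu, hv⟩, hm⟩, rfl⟩, (trunc_cons hk false u).symm⟩
    · rw [meetAge_cons_ne (by simp)] at hm; omega
    · rw [meetAge_cons_ne (by simp)] at hm; omega
    · rw [meetAge_cons_same] at hm
      exact Or.inr ⟨trunc k u, ⟨⟨u, v⟩, ⟨⟨hu, hv⟩, hm⟩, rfl⟩, (trunc_cons hk true u).symm⟩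
  · rintro (⟨w', ⟨⟨u, v⟩, ⟨⟨hu, hv⟩, hm⟩, rfl⟩, rfl⟩ | ⟨w', ⟨⟨u, v⟩, ⟨⟨hu, hv⟩, hm⟩, rfl⟩, rfl⟩)
    · refine ⟨⟨Fin.cons false u, Fin.cons false v⟩,
        ⟨⟨mem_glue.mpr (Or.inl ⟨u, hu, rfl⟩), mem_glue.mpr (Or.inl ⟨v, hv, rfl⟩)⟩, ?_⟩,
        (trunc_cons hk _ u)⟩
      rw [meetAge_cons_same]; exact hm
    · refine ⟨⟨Fin.cons true u, Fin.cons true v⟩,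
        ⟨⟨mem_glue.mpr (Or.inr ⟨u, hu, rfl⟩), mem_glue.mpr (Or.inr ⟨v, hv, rfl⟩)⟩, ?_⟩,
        (trunc_cons hk _ u)⟩
      rw [meetAge_cons_same]; exact hm

lemma bcount_glue {k : ℕ} (hk : k ≤ n) (A₁ A₂ : Finset (Leaf n)) :
    bcount (glue A₁ A₂) k = bcount A₁ k + bcount A₂ k := by
  rw [bcount, branchPts_glue hk, Finset.card_union_of_disjoint,
    Finset.card_image_of_injective _ (cons_injective false),
    Finset.card_image_of_injective _ (cons_injective true)]
  · rfl
  · rw [Finset.disjoint_left]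
    rintro x hx hx'
    obtain ⟨u, -, rfl⟩ := Finset.mem_image.mp hx
    obtain ⟨v, -, hv⟩ := Finset.mem_image.mp hx'
    have := congrFun hv 0
    simp at this

lemma bcount_glue_top {A₁ A₂ : Finset (Leaf n)} (h₁ : A₁.Nonempty) (h₂ : A₂.Nonempty) :
    bcount (glue A₁ A₂) (n + 1) = 1 := by
  obtain ⟨u, hu⟩ := h₁
  obtain ⟨v, hv⟩ := h₂
  rw [bcount, Finset.card_eq_one]
  refine ⟨fun _ => false, ?_⟩
  ext w
  simp only [branchPts, Finset.mem_image, Finset.mem_filter, Finset.mem_product,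
    Finset.mem_singleton]
  constructor
  · rintro ⟨p, -, rfl⟩
    exact trunc_top (le_refl _) p.1
  · rintro rfl
    refine ⟨⟨Fin.cons false u, Fin.cons true v⟩,
      ⟨⟨mem_glue.mpr (Or.inl ⟨u, hu, rfl⟩), mem_glue.mpr (Or.inr ⟨v, hv, rfl⟩)⟩,
        meetAge_cons_ne (by simp) u v⟩, trunc_top (le_refl _) _⟩

lemma glue_nonempty {A₁ A₂ : Finset (Leaf n)} (h₁ : A₁.Nonempty) :
    glue A₁ A₂ ≠ ∅ := by
  obtain ⟨u, hu⟩ := h₁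
  intro h
  have : Fin.cons false u ∈ glue A₁ A₂ := mem_glue.mpr (Or.inl ⟨u, hu, rfl⟩)
  rw [h] at this
  simp at this

lemma foPhi_glue (hs : ℕ → ℝ) {A₁ A₂ : Finset (Leaf n)}
    (h₁ : A₁.Nonempty) (h₂ : A₂.Nonempty) :
    foPhi (n+1) hs (hs (n+1)) (glue A₁ A₂) =
      foPhi n hs (hs n) A₁ + foPhi n hs (hs n) A₂ + 2 * (hs (n+1) - hs n) := by
  rw [foPhi, if_neg (glue_nonempty h₁), foPhi, if_neg (Finset.nonempty_iff_ne_empty.mp h₁),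
    foPhi, if_neg (Finset.nonempty_iff_ne_empty.mp h₂)]
  rw [Finset.sum_range_succ]
  have hsum : ∀ k ∈ Finset.range (n+1),
      hs k * (bcount (glue A₁ A₂) k : ℝ) =
        hs k * (bcount A₁ k : ℝ) + hs k * (bcount A₂ k : ℝ) := by
    intro k hk
    rw [bcount_glue (Nat.lt_succ_iff.mp (Finset.mem_range.mp hk)) A₁ A₂]
    push_cast
    ring
  rw [Finset.sum_congr rfl hsum, Finset.sum_add_distrib, bcount_glue_top h₁ h₂]
  push_cast
  ring

end Split
section Wlems

variable {n : ℕ}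

lemma W_pos {a : ℕ} (ha : a ≤ 2 ^ n) (Φ : Finset (Leaf n) → ℝ) : 0 < W n Φ a := by
  have hcard : (Finset.univ : Finset (Leaf n)).card = 2 ^ n := by simp
  obtain ⟨B, -, hB⟩ := Finset.exists_subset_card_eq (s := (Finset.univ : Finset (Leaf n)))
    (show a ≤ _ by rw [hcard]; exact ha)
  refine Finset.sum_pos' (fun A _ => (Real.exp_pos _).le) ⟨B, ?_, Real.exp_pos _⟩
  simp [hB]

lemma foPhi_lower (hs : ℕ → ℝ) (hmono : Monotone hs) (A : Finset (Leaf n)) :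
    -(3 * |hs 0| * 2 ^ n) ≤ foPhi n hs (hs n) A := by
  rw [foPhi]
  split
  · have : (0:ℝ) ≤ 3 * |hs 0| * 2 ^ n := by positivity
    linarith
  · have hterm : ∀ k ∈ Finset.range (n + 1),
        -(|hs 0| * 2 ^ (n - k)) ≤ hs k * (bcount A k : ℝ) := by
      intro k hk
      rcases le_or_gt 0 (hs k) with hpos | hneg
      · have : (0:ℝ) ≤ hs k * (bcount A k : ℝ) := by positivity
        nlinarith [abs_nonneg (hs 0), pow_pos (by norm_num : (0:ℝ) < 2) (n - k)]
      · have hb : (bcount A k : ℝ) ≤ 2 ^ (n - k) := by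
          exact_mod_cast Nat.cast_le.mpr (bcount_le A k)
        have h1 : hs k * (2 ^ (n - k) : ℝ) ≤ hs k * (bcount A k : ℝ) := by
          nlinarith
        have h2 : -(|hs 0|) ≤ hs k := by
          have := hmono (Nat.zero_le k)
          have := neg_abs_le (hs 0)
          linarith
        have h3 : -(|hs 0| * 2 ^ (n - k)) ≤ hs k * (2 ^ (n - k) : ℝ) := by
          have : (0:ℝ) ≤ (2:ℝ) ^ (n - k) := by positivity
          nlinarith
        linarith
    have hsum : -(∑ k ∈ Finset.range (n + 1), |hs 0| * 2 ^ (n - k)) ≤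
        ∑ k ∈ Finset.range (n + 1), hs k * (bcount A k : ℝ) := by
      rw [← Finset.sum_neg_distrib]
      exact Finset.sum_le_sum hterm
    have hgeo : ∑ k ∈ Finset.range (n + 1), (|hs 0| * 2 ^ (n - k) : ℝ) ≤ |hs 0| * 2 ^ (n+1) := by
      rw [← Finset.mul_sum]
      have : ∑ k ∈ Finset.range (n + 1), ((2:ℝ) ^ (n - k)) ≤ 2 ^ (n + 1) := by
        have := Finset.sum_range_succ_comm (fun k => ((2:ℝ)) ^ k) n
        have heq : ∑ k ∈ Finset.range (n + 1), ((2:ℝ) ^ (n - k)) =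
            ∑ k ∈ Finset.range (n + 1), ((2:ℝ) ^ k) := by
          apply Finset.sum_nbij' (fun k => n - k) (fun k => n - k) <;>
            intro a ha <;> simp [Finset.mem_range] at * <;> omega
        rw [heq]
        have h2' : ∑ k ∈ Finset.range (n + 1), ((2:ℝ)) ^ k = 2 ^ (n+1) - 1 := by
          rw [geom_sum_eq (by norm_num : (2:ℝ) ≠ 1) (n + 1)]; norm_num
        rw [h2']
        linarith
      nlinarith [abs_nonneg (hs 0)]
    have hhn : -(|hs 0|) ≤ hs n := by
      have := hmono (Nat.zero_le n)
      have := neg_abs_le (hs 0)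
      linarith
    have hp : (1:ℝ) ≤ 2 ^ n := one_le_pow₀ (by norm_num : (1:ℝ) ≤ 2)
    have : (2:ℝ) ^ (n+1) = 2 * 2 ^ n := by ring
    nlinarith [abs_nonneg (hs 0)]

lemma omegaN_le (hs : ℕ → ℝ) (hmono : Monotone hs) {a : ℕ} (ha : a ≤ 2 ^ n) :
    Real.log (W n (foPhi n hs (hs n)) a) / 2 ^ n ≤ Real.log 2 + 3 * |hs 0| := by
  have hW : W n (foPhi n hs (hs n)) a ≤ (2:ℝ) ^ (2 ^ n) * Real.exp (3 * |hs 0| * 2 ^ n) := by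
    rw [W]
    calc ∑ A ∈ Finset.univ.filter (fun A : Finset (Leaf n) => A.card = a),
          Real.exp (-foPhi n hs (hs n) A)
        ≤ ∑ A ∈ Finset.univ.filter (fun A : Finset (Leaf n) => A.card = a),
          Real.exp (3 * |hs 0| * 2 ^ n) := by
          refine Finset.sum_le_sum fun A _ => Real.exp_le_exp.mpr ?_
          have := foPhi_lower hs hmono A
          linarith
      _ = ((Finset.univ.filter (fun A : Finset (Leaf n) => A.card = a)).card : ℝ) *
          Real.exp (3 * |hs 0| * 2 ^ n) := by rw [Finset.sum_const, nsmul_eq_mul]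
      _ ≤ (2:ℝ) ^ (2 ^ n) * Real.exp (3 * |hs 0| * 2 ^ n) := by
          have hc : (Finset.univ.filter (fun A : Finset (Leaf n) => A.card = a)).card ≤
              2 ^ (2 ^ n) := by
            calc _ ≤ (Finset.univ : Finset (Finset (Leaf n))).card :=
                  Finset.card_le_card (Finset.filter_subset _ _)
              _ = 2 ^ (2 ^ n) := by simp
          have : ((Finset.univ.filter (fun A : Finset (Leaf n) => A.card = a)).card : ℝ) ≤
              (2:ℝ) ^ (2 ^ n) := by exact_mod_cast hc
          nlinarith [Real.exp_pos (3 * |hs 0| * 2 ^ n)]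
  have hWpos := W_pos ha (foPhi n hs (hs n))
  have hlog : Real.log (W n (foPhi n hs (hs n)) a) ≤
      Real.log ((2:ℝ) ^ (2 ^ n) * Real.exp (3 * |hs 0| * 2 ^ n)) :=
    Real.log_le_log hWpos hW
  rw [Real.log_mul (by positivity) (Real.exp_ne_zero _), Real.log_pow, Real.log_exp] at hlog
  rw [div_le_iff₀ (by positivity : (0:ℝ) < (2:ℝ) ^ n)]
  calc Real.log (W n (foPhi n hs (hs n)) a) ≤ (2 ^ n : ℕ) * Real.log 2 + 3 * |hs 0| * 2 ^ n :=
        hlog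
    _ ≤ (Real.log 2 + 3 * |hs 0|) * 2 ^ n := by
        push_cast
        have : (0:ℝ) ≤ Real.log 2 := Real.log_nonneg (by norm_num)
        nlinarith [pow_pos (by norm_num : (0:ℝ) < 2) n, abs_nonneg (hs 0)]

lemma glue_injective :
    Function.Injective (fun p : Finset (Leaf n) × Finset (Leaf n) => glue p.1 p.2) := by
  intro p q h
  simp only at h
  have key : ∀ (A₁ A₂ : Finset (Leaf n)),
      (glue A₁ A₂).filter (fun x => x 0 = false) = A₁.image (fun u : Leaf n => (Fin.cons false u : Leaf (n+1))) := by
    intro A₁ A₂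
    ext x
    simp only [Finset.mem_filter, Finset.mem_image]
    constructor
    · rintro ⟨hx, hx0⟩
      rcases mem_glue.mp hx with ⟨u, hu, rfl⟩ | ⟨u, hu, rfl⟩
      · exact ⟨u, hu, rfl⟩
      · simp at hx0
    · rintro ⟨u, hu, rfl⟩
      exact ⟨mem_glue.mpr (Or.inl ⟨u, hu, rfl⟩), by simp⟩
  have key2 : ∀ (A₁ A₂ : Finset (Leaf n)),
      (glue A₁ A₂).filter (fun x => x 0 = true) = A₂.image (fun u : Leaf n => (Fin.cons true u : Leaf (n+1))) := by
    intro A₁ A₂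
    ext x
    simp only [Finset.mem_filter, Finset.mem_image]
    constructor
    · rintro ⟨hx, hx0⟩
      rcases mem_glue.mp hx with ⟨u, hu, rfl⟩ | ⟨u, hu, rfl⟩
      · simp at hx0
      · exact ⟨u, hu, rfl⟩
    · rintro ⟨u, hu, rfl⟩
      exact ⟨mem_glue.mpr (Or.inr ⟨u, hu, rfl⟩), by simp⟩
  have h1 : p.1.image (fun u : Leaf n => (Fin.cons false u : Leaf (n+1))) = q.1.image (fun u : Leaf n => (Fin.cons false u : Leaf (n+1))) := by
    rw [← key p.1 p.2, ← key q.1 q.2, h]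
  have h2 : p.2.image (fun u : Leaf n => (Fin.cons true u : Leaf (n+1))) = q.2.image (fun u : Leaf n => (Fin.cons true u : Leaf (n+1))) := by
    rw [← key2 p.1 p.2, ← key2 q.1 q.2, h]
  have e1 : p.1 = q.1 := Finset.image_injective (cons_injective false) h1
  have e2 : p.2 = q.2 := Finset.image_injective (cons_injective true) h2
  exact Prod.ext e1 e2

lemma W_superadd (hs : ℕ → ℝ) {a : ℕ} (ha : 1 ≤ a) :
    W n (foPhi n hs (hs n)) a ^ 2 * Real.exp (-(2 * (hs (n+1) - hs n))) ≤
      W (n+1) (foPhi (n+1) hs (hs (n+1))) (2 * a) := by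
  classical
  set S := Finset.univ.filter (fun A : Finset (Leaf n) => A.card = a) with hS
  set T := Finset.univ.filter (fun A : Finset (Leaf (n+1)) => A.card = 2 * a) with hT
  have hmaps : ∀ p ∈ S ×ˢ S, glue p.1 p.2 ∈ T := by
    rintro ⟨A₁, A₂⟩ hp
    rw [Finset.mem_product] at hp
    simp only [hS, Finset.mem_filter, Finset.mem_univ, true_and] at hp
    simp only [hT, Finset.mem_filter, Finset.mem_univ, true_and]
    rw [card_glue, hp.1, hp.2]
    ring
  have hinj : Set.InjOn (fun p : Finset (Leaf n) × Finset (Leaf n) => glue p.1 p.2)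
      (S ×ˢ S : Finset _) := fun p _ q _ h => glue_injective h
  have step1 : ∑ p ∈ S ×ˢ S, Real.exp (-(foPhi (n+1) hs (hs (n+1)) (glue p.1 p.2))) ≤
      ∑ A ∈ T, Real.exp (-(foPhi (n+1) hs (hs (n+1)) A)) := by
    have himg : ∑ A ∈ (S ×ˢ S).image (fun p : Finset (Leaf n) × Finset (Leaf n) => glue p.1 p.2),
        Real.exp (-(foPhi (n+1) hs (hs (n+1)) A)) =
        ∑ p ∈ S ×ˢ S, Real.exp (-(foPhi (n+1) hs (hs (n+1)) (glue p.1 p.2))) :=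
      Finset.sum_image (fun p hp q hq h => hinj hp hq h)
    rw [← himg]
    refine Finset.sum_le_sum_of_subset_of_nonneg ?_ (fun _ _ _ => (Real.exp_pos _).le)
    intro A hA
    obtain ⟨p, hp, rfl⟩ := Finset.mem_image.mp hA
    exact hmaps p hp
  have step2 : ∀ p ∈ S ×ˢ S, Real.exp (-(foPhi (n+1) hs (hs (n+1)) (glue p.1 p.2))) =
      Real.exp (-(foPhi n hs (hs n) p.1)) * Real.exp (-(foPhi n hs (hs n) p.2)) *
        Real.exp (-(2 * (hs (n+1) - hs n))) := by
    rintro ⟨A₁, A₂⟩ hp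
    rw [Finset.mem_product] at hp
    simp only [hS, Finset.mem_filter, Finset.mem_univ, true_and] at hp
    have hne1 : A₁.Nonempty := Finset.card_pos.mp (by omega)
    have hne2 : A₂.Nonempty := Finset.card_pos.mp (by omega)
    rw [← Real.exp_add, ← Real.exp_add]
    congr 1
    rw [foPhi_glue hs hne1 hne2]
    ring
  have step3 : ∑ p ∈ S ×ˢ S, Real.exp (-(foPhi (n+1) hs (hs (n+1)) (glue p.1 p.2))) =
      (∑ A ∈ S, Real.exp (-(foPhi n hs (hs n) A))) ^ 2 * Real.exp (-(2 * (hs (n+1) - hs n))) := by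
    rw [Finset.sum_congr rfl step2, ← Finset.sum_mul]
    congr 1
    rw [Finset.sum_product, sq, Finset.sum_mul_sum]
  calc W n (foPhi n hs (hs n)) a ^ 2 * Real.exp (-(2 * (hs (n+1) - hs n)))
      = ∑ p ∈ S ×ˢ S, Real.exp (-(foPhi (n+1) hs (hs (n+1)) (glue p.1 p.2))) := by
        rw [step3]; rfl
    _ ≤ ∑ A ∈ T, Real.exp (-(foPhi (n+1) hs (hs (n+1)) A)) := step1
    _ = W (n+1) (foPhi (n+1) hs (hs (n+1))) (2 * a) := rfl

end Wlems
section Analysis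

lemma filter_card_top (n : ℕ) :
    (Finset.univ.filter (fun A : Finset (Leaf n) => A.card = 2 ^ n)) = {Finset.univ} := by
  ext A
  simp only [Finset.mem_filter, Finset.mem_univ, true_and, Finset.mem_singleton]
  constructor
  · intro h
    apply Finset.eq_univ_of_card
    rw [h]; simp
  · rintro rfl; simp

lemma omegaN_one (hs : ℕ → ℝ) (n : ℕ) :
    omegaN n (foPhi n hs (hs n)) 1 =
      -((∑ k ∈ Finset.range (n + 1), hs k / 2 ^ k) + hs n / 2 ^ n) := by
  have hfloor : ⌊(1:ℝ) * 2 ^ n⌋₊ = 2 ^ n := by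
    rw [one_mul]
    rw [show ((2:ℝ) ^ n) = ((2 ^ n : ℕ) : ℝ) by push_cast; ring]
    exact Nat.floor_natCast _
  have hW : W n (foPhi n hs (hs n)) (2 ^ n) =
      Real.exp (-foPhi n hs (hs n) Finset.univ) := by
    rw [W, filter_card_top, Finset.sum_singleton]
  have huniv : (Finset.univ : Finset (Leaf n)) ≠ ∅ := by
    have : (Finset.univ : Finset (Leaf n)).card = 2 ^ n := by simp
    intro h
    rw [h] at this
    simp at this
    exact absurd this (by positivity)
  have hPhi : foPhi n hs (hs n) Finset.univ =
      (∑ k ∈ Finset.range (n + 1), hs k * 2 ^ (n - k)) + hs n := by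
    rw [foPhi, if_neg huniv]
    congr 1
    refine Finset.sum_congr rfl fun k hk => ?_
    rw [bcount_univ (Nat.lt_succ_iff.mp (Finset.mem_range.mp hk))]
    push_cast
    ring
  rw [omegaN, hfloor, hW, Real.log_exp, hPhi]
  rw [neg_div, add_div, Finset.sum_div]
  congr 2
  refine Finset.sum_congr rfl fun k hk => ?_
  have hkn : k ≤ n := Nat.lt_succ_iff.mp (Finset.mem_range.mp hk)
  have h2 : (2:ℝ) ^ (n - k) * 2 ^ k = 2 ^ n := by
    rw [← pow_add]
    congr 1
    omega
  rw [div_eq_div_iff (by positivity) (by positivity), mul_assoc, h2]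

lemma aux_summable (f : ℕ → ℝ) (hf0 : ∀ k, 0 ≤ f k)
    (htend : ∃ M, Tendsto (fun n => (∑ k ∈ Finset.range (n + 1), f k) + f n) atTop (nhds M)) :
    Summable f := by
  obtain ⟨M, hM⟩ := htend
  have hbdd : BddAbove (Set.range fun n => (∑ k ∈ Finset.range (n + 1), f k) + f n) :=
    hM.bddAbove_range
  obtain ⟨C, hC⟩ := hbdd
  refine summable_of_sum_range_le (c := max C 0) hf0 fun N => ?_
  match N with
  | 0 => simp
  | m + 1 =>
    have h1 : (∑ k ∈ Finset.range (m + 1), f k) + f m ≤ C :=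
      hC (Set.mem_range.mpr ⟨m, rfl⟩)
    have := hf0 m
    have : ∑ k ∈ Finset.range (m + 1), f k ≤ C := by linarith
    exact le_trans this (le_max_left _ _)

lemma tendsto_of_quasi (x c : ℕ → ℝ) (B : ℝ) (N₀ : ℕ) (hc0 : ∀ n, 0 ≤ c n)
    (hcs : Summable c) (hstep : ∀ n, N₀ ≤ n → x n ≤ x (n + 1) + c (n + 1))
    (hB : ∀ n, N₀ ≤ n → x n ≤ B) : ∃ L, Tendsto x atTop (nhds L) := by
  set C : ℕ → ℝ := fun n => ∑ i ∈ Finset.range (n + 1), c i with hCdef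
  have hCtend : Tendsto C atTop (nhds (∑' i, c i)) := by
    have h0 := hcs.hasSum.tendsto_sum_nat
    exact (tendsto_add_atTop_iff_nat 1).mpr h0
  have hCle : ∀ n, C n ≤ ∑' i, c i := fun n =>
    Summable.sum_le_tsum (Finset.range (n + 1)) (fun i _ => hc0 i) hcs
  set y : ℕ → ℝ := fun k => x (k + N₀) + C (k + N₀) with hydef
  have hymono : Monotone y := by
    apply monotone_nat_of_le_succ
    intro k
    have h1 := hstep (k + N₀) (by omega)
    have h2 : C (k + 1 + N₀) = C (k + N₀) + c (k + N₀ + 1) := by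
      rw [hCdef]
      simp only
      rw [show k + 1 + N₀ + 1 = (k + N₀ + 1) + 1 by omega, Finset.sum_range_succ]
    simp only [hydef]
    rw [h2]
    have := hstep (k + N₀) (by omega)
    have heq : k + 1 + N₀ = k + N₀ + 1 := by omega
    rw [heq]
    linarith
  have hybdd : BddAbove (Set.range y) := by
    refine ⟨B + ∑' i, c i, ?_⟩
    rintro _ ⟨k, rfl⟩
    have := hB (k + N₀) (by omega)
    have := hCle (k + N₀)
    simp only [hydef]
    linarith
  have hytend : Tendsto y atTop (nhds (⨆ k, y k)) := tendsto_atTop_ciSup hymono hybdd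
  have hCshift : Tendsto (fun k => C (k + N₀)) atTop (nhds (∑' i, c i)) :=
    (tendsto_add_atTop_iff_nat N₀).mpr hCtend
  have hxshift : Tendsto (fun k => x (k + N₀)) atTop (nhds ((⨆ k, y k) - ∑' i, c i)) := by
    have := hytend.sub hCshift
    have heq : (fun k => y k - C (k + N₀)) = fun k => x (k + N₀) := by
      funext k
      simp [hydef]
    rwa [heq] at this
  exact ⟨(⨆ k, y k) - ∑' i, c i, (tendsto_add_atTop_iff_nat N₀).mp hxshift⟩

end Analysis
lemma summable_inv_two_pow : Summable (fun k : ℕ => (1:ℝ) / 2 ^ k) := by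
  have h : Summable (fun k : ℕ => ((1:ℝ)/2) ^ k) :=
    summable_geometric_of_lt_one (by norm_num) (by norm_num)
  refine h.congr fun k => ?_
  rw [div_pow, one_pow]

theorem stmt6' (hs : ℕ → ℝ) (hmono : Monotone hs) :
    (∀ ε ∈ Set.Icc (0 : ℝ) 1, IsDyadic ε →
        ∃ L : ℝ, Tendsto (fun n => omegaN n (foPhi n hs (hs n)) ε) atTop (nhds L)) ↔
      Summable (fun k : ℕ => hs k / 2 ^ k) := by
  constructor
  · -- forward: use ε = 1
    intro hlim
    obtain ⟨L, hL⟩ := hlim 1 ⟨zero_le_one, le_refl 1⟩ ⟨1, 0, by norm_num⟩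
    have hL' : Tendsto (fun n => (∑ k ∈ Finset.range (n + 1), hs k / 2 ^ k) + hs n / 2 ^ n)
        atTop (nhds (-L)) := by
      have := hL.neg
      refine this.congr fun n => ?_
      rw [omegaN_one hs n, neg_neg]
    set g : ℕ → ℝ := fun k => (hs k - hs 0) / 2 ^ k with hgdef
    have hg0 : ∀ k, 0 ≤ g k := fun k =>
      div_nonneg (by have := hmono (Nat.zero_le k); linarith) (by positivity)
    have hgeo : Summable (fun k : ℕ => hs 0 / 2 ^ k) := by
      have := summable_inv_two_pow.mul_left (hs 0)
      refine this.congr fun k => ?_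
      field_simp
    have hPtend : Tendsto (fun n => ∑ k ∈ Finset.range (n + 1), hs 0 / 2 ^ k) atTop
        (nhds (∑' k, hs 0 / 2 ^ k)) :=
      (tendsto_add_atTop_iff_nat 1).mpr hgeo.hasSum.tendsto_sum_nat
    have hterm0 : Tendsto (fun n : ℕ => hs 0 / 2 ^ n) atTop (nhds 0) :=
      hgeo.tendsto_atTop_zero
    have hgsum : Summable g := by
      refine aux_summable g hg0 ⟨(-L) - (∑' k, hs 0 / 2 ^ k) - 0, ?_⟩
      have := (hL'.sub hPtend).sub hterm0
      refine this.congr fun n => ?_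
      have hsplit : ∀ k, hs k / 2 ^ k = g k + hs 0 / 2 ^ k := by
        intro k
        rw [hgdef]
        field_simp
        ring
      have hsum : ∑ k ∈ Finset.range (n + 1), hs k / 2 ^ k =
          (∑ k ∈ Finset.range (n + 1), g k) + ∑ k ∈ Finset.range (n + 1), hs 0 / 2 ^ k := by
        rw [← Finset.sum_add_distrib]
        exact Finset.sum_congr rfl fun k _ => hsplit k
      rw [hsum, hsplit n]
      ring
    refine (hgsum.add hgeo).congr fun k => ?_
    rw [hgdef]
    field_simp
    ring
  · -- backward
    intro hsum ε hIcc hdy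
    rcases eq_or_lt_of_le hIcc.1 with hε0 | hε0
    · -- ε = 0
      refine ⟨0, ?_⟩
      have : (fun n => omegaN n (foPhi n hs (hs n)) ε) = fun _ => (0:ℝ) := by
        funext n
        rw [omegaN, ← hε0]
        have hf : ⌊(0:ℝ) * 2 ^ n⌋₊ = 0 := by norm_num
        rw [hf]
        have hfil : (Finset.univ.filter (fun A : Finset (Leaf n) => A.card = 0)) = {∅} := by
          ext A
          simp [Finset.card_eq_zero]
        rw [W, hfil, Finset.sum_singleton, foPhi, if_pos rfl, neg_zero, Real.exp_zero,
          Real.log_one, zero_div]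
      rw [this]
      exact tendsto_const_nhds
    · -- ε > 0
      obtain ⟨z, m, hzm⟩ := hdy
      have h2m : (0:ℝ) < 2 ^ m := by positivity
      have hz0 : 0 < z := by
        by_contra h
        push_neg at h
        have : ε ≤ 0 := by
          rw [hzm]
          apply div_nonpos_of_nonpos_of_nonneg _ h2m.le
          exact_mod_cast h
        linarith
      set j : ℕ := z.toNat with hjdef
      have hjz : (j : ℝ) = (z : ℝ) := by
        rw [hjdef]
        exact_mod_cast Int.toNat_of_nonneg hz0.le
      have hεj : ε = (j : ℝ) / 2 ^ m := by rw [hzm, hjz]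
      have hj1 : 1 ≤ j := by
        rw [hjdef]
        omega
      have hjle : j ≤ 2 ^ m := by
        have h1 : (j : ℝ) ≤ 2 ^ m := by
          have := hIcc.2
          rw [hεj] at this
          rw [div_le_one h2m] at this
          linarith
        have h2 : (j:ℝ) ≤ ((2 ^ m : ℕ) : ℝ) := by push_cast; linarith
        exact_mod_cast h2
      -- floor identity
      have hfloor : ∀ n, m ≤ n → ⌊ε * 2 ^ n⌋₊ = j * 2 ^ (n - m) := by
        intro n hn
        have hpow : (2:ℝ) ^ n = 2 ^ m * 2 ^ (n - m) := by
          rw [← pow_add]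
          congr 1
          omega
        have : ε * 2 ^ n = ((j * 2 ^ (n - m) : ℕ) : ℝ) := by
          rw [hεj, hpow]
          push_cast
          field_simp
        rw [this, Nat.floor_natCast]
      have hale : ∀ n, m ≤ n → j * 2 ^ (n - m) ≤ 2 ^ n := by
        intro n hn
        calc j * 2 ^ (n - m) ≤ 2 ^ m * 2 ^ (n - m) := Nat.mul_le_mul_right _ hjle
          _ = 2 ^ n := by rw [← pow_add]; congr 1; omega
      set c : ℕ → ℝ := fun n => if n = 0 then 0 else (hs n - hs (n - 1)) / 2 ^ (n - 1)
        with hcdef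
      have hc0 : ∀ n, 0 ≤ c n := by
        intro n
        rw [hcdef]
        match n with
        | 0 => simp
        | k + 1 =>
          simp only [Nat.succ_ne_zero, if_false, Nat.add_sub_cancel]
          have := hmono (Nat.le_succ k)
          apply div_nonneg (by linarith) (by positivity)
      have hcsucc : ∀ n, c (n + 1) = (hs (n + 1) - hs n) / 2 ^ n := by
        intro n
        rw [hcdef]
        simp
      have hcs : Summable c := by
        rw [← summable_nat_add_iff 1]
        have h1 : Summable (fun n => 2 * (hs (n + 1) / 2 ^ (n + 1))) :=
          ((summable_nat_add_iff 1).mpr hsum).mul_left 2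
        refine (h1.sub hsum).congr fun n => ?_
        rw [hcsucc]
        have hp : (2:ℝ) ^ (n + 1) = 2 * 2 ^ n := by ring
        field_simp [hp]
        ring
      have hstep : ∀ n, m ≤ n → omegaN n (foPhi n hs (hs n)) ε ≤
          omegaN (n + 1) (foPhi (n + 1) hs (hs (n + 1))) ε + c (n + 1) := by
        intro n hn
        have hWs := W_superadd (n := n) hs (a := j * 2 ^ (n - m)) (Nat.mul_pos (by omega) (pow_pos (by norm_num) _))
        have h2a : 2 * (j * 2 ^ (n - m)) = j * 2 ^ (n + 1 - m) := by
          rw [show n + 1 - m = (n - m) + 1 by omega, pow_succ]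
          ring
        have hWnpos : 0 < W n (foPhi n hs (hs n)) (j * 2 ^ (n - m)) :=
          W_pos (hale n hn) _
        have hWn1pos : 0 < W (n + 1) (foPhi (n + 1) hs (hs (n + 1))) (j * 2 ^ (n + 1 - m)) :=
          W_pos (hale (n + 1) (by omega)) _
        rw [h2a] at hWs
        set LN := Real.log (W n (foPhi n hs (hs n)) (j * 2 ^ (n - m))) with hLN
        set LN1 := Real.log (W (n + 1) (foPhi (n + 1) hs (hs (n + 1))) (j * 2 ^ (n + 1 - m)))
          with hLN1
        have hlog : 2 * LN + (-(2 * (hs (n + 1) - hs n))) ≤ LN1 := by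
          have := Real.log_le_log (by positivity) hWs
          rw [Real.log_mul (by positivity) (Real.exp_ne_zero _), Real.log_pow,
            Real.log_exp] at this
          rw [hLN, hLN1]
          push_cast at this
          linarith
        rw [omegaN, omegaN, hfloor n hn, hfloor (n + 1) (by omega), hcsucc, ← hLN, ← hLN1]
        have hpos : (0:ℝ) < 2 ^ (n + 1) := by positivity
        rw [div_add_div _ _ (by positivity : ((2:ℝ) ^ (n+1)) ≠ 0) (by positivity : ((2:ℝ) ^ n) ≠ 0)]
        rw [div_le_div_iff₀ (by positivity) (by positivity)]
        have hp : (2:ℝ) ^ (n + 1) = 2 * 2 ^ n := by ring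
        rw [hp]
        have h2 : (0:ℝ) < 2 ^ n := by positivity
        nlinarith [mul_le_mul_of_nonneg_right hlog (mul_pos h2 h2).le]
      have hB : ∀ n, m ≤ n → omegaN n (foPhi n hs (hs n)) ε ≤ Real.log 2 + 3 * |hs 0| := by
        intro n hn
        rw [omegaN, hfloor n hn]
        exact omegaN_le hs hmono (hale n hn)
      exact tendsto_of_quasi _ c (Real.log 2 + 3 * |hs 0|) m hc0 hcs hstep hB

/-- Proposition 1.12: for a non-decreasing sequence `(h_k)` and the
first order branching clustering functions `Φ_n` with parameters `(h_k)_{k=0}^n` and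
`h = h_n`, the canonical free energy `ω(ε)` exists (finite) at every dyadic `ε ∈ [0,1]`
iff `∑_k 2⁻ᵏ h_k < ∞`. -/
theorem stmt6 (hs : ℕ → ℝ) (hmono : Monotone hs) :
    (∀ ε ∈ Set.Icc (0 : ℝ) 1, IsDyadic ε →
        ∃ L : ℝ, Tendsto (fun n => omegaN n (foPhi n hs (hs n)) ε) atTop (nhds L)) ↔
      Summable (fun k : ℕ => hs k / 2 ^ k) := by
  exact stmt6' hs hmono

end PWC
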